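/- If Γ is a k-regular, ω-clique regular graph on n vertices with smallest adjacency eigenvalue λ_1, then λ_1 ≥ −k/(ω−1). If additionally k < ω(ω−1), then λ_1 = −k/(ω−1) with multiplicity at least n − nk/(ω(ω−1)). -/

import Mathlib

open SimpleGraph Matrix Polynomial Finset

section Aux

open Polynomial Matrix Finset

variable {n : Type*} [Fintype n] [DecidableEq n]

lemma charpoly_unitary_conj' (U : Matrix.unitaryGroup n ℝ) (D : Matrix n n ℝ) :
    ((U : Matrix n n ℝ) * D * star (U : Matrix n n ℝ)).charpoly = D.charpoly := by
  set Um := (U : Matrix n n ℝ) with hUm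
  have h1 : Um * star Um = 1 := Matrix.mem_unitaryGroup_iff.mp U.2
  have key : charmatrix (Um * D * star Um)
      = ((C : ℝ →+* ℝ[X]).mapMatrix Um) * charmatrix D * ((C : ℝ →+* ℝ[X]).mapMatrix (star Um)) := by
    unfold charmatrix
    have hone : ((C : ℝ →+* ℝ[X]).mapMatrix Um) * ((C : ℝ →+* ℝ[X]).mapMatrix (star Um)) = 1 := by
      rw [← RingHom.map_mul, h1, RingHom.map_one]
    have hscal : (Matrix.scalar n (X : ℝ[X])) = (X : ℝ[X]) • (1 : Matrix n n ℝ[X]) := by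
      ext i j; by_cases h : i = j <;> simp [Matrix.scalar_apply, Matrix.diagonal, h, Matrix.one_apply]
    rw [Matrix.mul_sub, Matrix.sub_mul]
    congr 1
    · rw [hscal, mul_smul_comm, Matrix.mul_one, Matrix.smul_mul, hone]
    · simp only [← RingHom.map_mul]
  rw [Matrix.charpoly, key, Matrix.det_mul, Matrix.det_mul, Matrix.charpoly, mul_comm,
    ← mul_assoc, ← RingHom.map_det, ← RingHom.map_det, ← RingHom.map_mul]
  have h2 : star Um * Um = 1 := Matrix.mem_unitaryGroup_iff'.mp U.2
  rw [← Matrix.det_mul, h2, Matrix.det_one, RingHom.map_one, one_mul]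

lemma charpoly_diagonal' (d : n → ℝ) :
    (Matrix.diagonal d).charpoly = ∏ i, ((X : ℝ[X]) - C (d i)) := by
  rw [Matrix.charpoly]
  have : charmatrix (Matrix.diagonal d) = Matrix.diagonal (fun i => (X : ℝ[X]) - C (d i)) := by
    ext i j
    by_cases h : i = j
    · subst h; simp
    · rw [Matrix.charmatrix_apply_ne _ _ _ h, Matrix.diagonal_apply_ne _ h,
        Matrix.diagonal_apply_ne _ h, map_zero, neg_zero]
  rw [this, Matrix.det_diagonal]

lemma hermitian_charpoly_eq' {A : Matrix n n ℝ} (hA : A.IsHermitian) :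
    A.charpoly = ∏ i, ((X : ℝ[X]) - C (hA.eigenvalues i)) := by
  have hsp := hA.spectral_theorem
  have hco : (RCLike.ofReal ∘ hA.eigenvalues : n → ℝ) = hA.eigenvalues := by
    funext i; simp [RCLike.ofReal]
  rw [hco, Unitary.conjStarAlgAut_apply] at hsp
  rw [(congrArg Matrix.charpoly hsp :), charpoly_unitary_conj', charpoly_diagonal']

lemma rank_unitary_conj' (U : Matrix.unitaryGroup n ℝ) (D : Matrix n n ℝ) :
    ((U : Matrix n n ℝ) * D * star (U : Matrix n n ℝ)).rank = D.rank := by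
  set Um := (U : Matrix n n ℝ)
  have h1 : Um * star Um = 1 := Matrix.mem_unitaryGroup_iff.mp U.2
  have h2 : star Um * Um = 1 := Matrix.mem_unitaryGroup_iff'.mp U.2
  have hu1 : IsUnit Um.det := IsUnit.of_mul_eq_one _ (by rw [← Matrix.det_mul, h1, Matrix.det_one])
  have hu2 : IsUnit (star Um).det := IsUnit.of_mul_eq_one _ (by rw [← Matrix.det_mul, h2, Matrix.det_one])
  rw [Matrix.rank_mul_eq_left_of_isUnit_det (star Um) _ hu2,
    Matrix.rank_mul_eq_right_of_isUnit_det Um D hu1]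

lemma hermitian_mult_add_rank' {A : Matrix n n ℝ} (hA : A.IsHermitian) (t : ℝ) :
    A.charpoly.rootMultiplicity t + (A - t • 1).rank = Fintype.card n := by
  classical
  have hcp := hermitian_charpoly_eq' hA
  have hprod : (∏ i, ((X : ℝ[X]) - C (hA.eigenvalues i)))
      = ((Finset.univ.val.map hA.eigenvalues).map (fun a => (X : ℝ[X]) - C a)).prod := by
    rw [Multiset.map_map]; rfl
  have hroots : A.charpoly.roots = Finset.univ.val.map hA.eigenvalues := by
    rw [hcp, hprod, Polynomial.roots_multiset_prod_X_sub_C]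
  have hmult : A.charpoly.rootMultiplicity t
      = (Finset.univ.filter (fun i => hA.eigenvalues i = t)).card := by
    rw [← Polynomial.count_roots, hroots, Multiset.count_map]
    have : Multiset.filter (fun a => t = hA.eigenvalues a) Finset.univ.val
        = (Finset.univ.filter (fun i => hA.eigenvalues i = t)).val := by
      rw [Finset.filter_val]
      exact Multiset.filter_congr (fun x _ => eq_comm)
    rw [this]
    rfl
  have hco : (RCLike.ofReal ∘ hA.eigenvalues : n → ℝ) = hA.eigenvalues := by
    funext i; simp [RCLike.ofReal]
  have hsp := hA.spectral_theorem
  rw [hco, Unitary.conjStarAlgAut_apply] at hsp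
  set Um := (hA.eigenvectorUnitary : Matrix n n ℝ) with hUm
  have hsub : A - t • 1 = Um * Matrix.diagonal (fun i => hA.eigenvalues i - t) * star Um := by
    have h1 : Um * star Um = 1 := Matrix.mem_unitaryGroup_iff.mp hA.eigenvectorUnitary.2
    have : Matrix.diagonal (fun i => hA.eigenvalues i - t)
        = Matrix.diagonal hA.eigenvalues - t • 1 := by
      ext i j; by_cases h : i = j <;>
        simp [h, Matrix.diagonal, Matrix.one_apply, Matrix.sub_apply]
    rw [this, Matrix.mul_sub, Matrix.sub_mul, ← hsp]
    congr 1
    rw [Matrix.mul_smul, Matrix.mul_one, Matrix.smul_mul, h1]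
  have hrank : (A - t • 1).rank
      = (Finset.univ.filter (fun i => hA.eigenvalues i - t ≠ 0)).card := by
    rw [hsub, rank_unitary_conj', Matrix.rank_diagonal, Fintype.card_subtype]
  rw [hmult, hrank]
  have : ∀ i, (hA.eigenvalues i = t) ↔ ¬(hA.eigenvalues i - t ≠ 0) := by
    intro i; rw [not_not, sub_eq_zero]
  rw [Finset.filter_congr (fun i _ => this i)]
  have h := Finset.card_filter_add_card_filter_not
    (s := (Finset.univ : Finset n)) (p := fun i => hA.eigenvalues i - t ≠ 0)
  rw [Finset.card_univ] at h
  omega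

end Aux

/-- A graph is `ω`-clique regular if its edge set is nonempty and every edge lies in a
unique clique of order `ω`. -/
def IsCliqueRegular {V : Type*} (G : SimpleGraph V) (ω : ℕ) : Prop :=
  G.edgeSet.Nonempty ∧
    ∀ ⦃x y : V⦄, G.Adj x y → ∃! s : Finset V, G.IsNClique ω s ∧ x ∈ s ∧ y ∈ s

section Graph

variable {V : Type*} [Fintype V] [DecidableEq V] (G : SimpleGraph V) [DecidableRel G.Adj]

lemma cr_two_le {ω : ℕ} (hcr : IsCliqueRegular G ω) : 2 ≤ ω := by
  obtain ⟨e, he⟩ := hcr.1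
  induction e with
  | h x y =>
    rw [SimpleGraph.mem_edgeSet] at he
    obtain ⟨s, ⟨hs, hx, hy⟩, -⟩ := hcr.2 he
    have : ({x, y} : Finset V) ⊆ s := by
      intro z hz; simp at hz; rcases hz with h | h <;> subst h <;> assumption
    have hcard : ({x, y} : Finset V).card ≤ s.card := Finset.card_le_card this
    rwa [Finset.card_pair he.ne, hs.2] at hcard

lemma cr_vertex_count {ω k : ℕ} (hcr : IsCliqueRegular G ω) (hreg : G.IsRegularOfDegree k)
    (x : V) : ((G.cliqueFinset ω).filter (fun s => x ∈ s)).card * (ω - 1) = k := by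
  have hω := cr_two_le G hcr
  have hnb : G.neighborFinset x
      = ((G.cliqueFinset ω).filter (fun s => x ∈ s)).biUnion (fun s => s.erase x) := by
    ext y
    simp only [SimpleGraph.mem_neighborFinset, Finset.mem_biUnion, Finset.mem_filter,
      SimpleGraph.mem_cliqueFinset_iff, Finset.mem_erase]
    constructor
    · intro hadj
      obtain ⟨s, ⟨hs, hx, hy⟩, -⟩ := hcr.2 hadj
      exact ⟨s, ⟨hs, hx⟩, hadj.ne', hy⟩
    · rintro ⟨s, ⟨hs, hx⟩, hne, hy⟩
      exact hs.1 hx hy (Ne.symm hne)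
  have hdisj : ∀ s₁ ∈ (G.cliqueFinset ω).filter (fun s => x ∈ s),
      ∀ s₂ ∈ (G.cliqueFinset ω).filter (fun s => x ∈ s), s₁ ≠ s₂ →
      Disjoint (s₁.erase x) (s₂.erase x) := by
    rintro s₁ hs₁ s₂ hs₂ hne
    rw [Finset.mem_filter, SimpleGraph.mem_cliqueFinset_iff] at hs₁ hs₂
    rw [Finset.disjoint_left]
    rintro y hy1 hy2
    rw [Finset.mem_erase] at hy1 hy2
    have hadj : G.Adj x y := hs₁.1.1 hs₁.2 hy1.2 (Ne.symm hy1.1)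
    obtain ⟨s, -, huniq⟩ := hcr.2 hadj
    exact hne ((huniq s₁ ⟨hs₁.1, hs₁.2, hy1.2⟩).trans (huniq s₂ ⟨hs₂.1, hs₂.2, hy2.2⟩).symm)
  have := congrArg Finset.card hnb
  rw [Finset.card_biUnion hdisj] at this
  rw [← hreg x, ← SimpleGraph.card_neighborFinset_eq_degree, this]
  rw [Finset.sum_congr rfl (fun s hs => ?_), Finset.sum_const, smul_eq_mul]
  rw [Finset.mem_filter, SimpleGraph.mem_cliqueFinset_iff] at hs
  rw [Finset.card_erase_of_mem hs.2, hs.1.2]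

lemma cr_global_count {ω k : ℕ} (hcr : IsCliqueRegular G ω) (hreg : G.IsRegularOfDegree k) :
    (G.cliqueFinset ω).card * (ω * (ω - 1)) = Fintype.card V * k := by
  classical
  have hω := cr_two_le G hcr
  have hdart : Fintype.card G.Dart = Fintype.card V * k := by
    rw [SimpleGraph.dart_card_eq_sum_degrees]
    simp [hreg _, Finset.sum_const, Finset.card_univ, mul_comm]
  let f : G.Dart → Finset V := fun d => (hcr.2 d.adj).choose
  have hf : ∀ d : G.Dart, G.IsNClique ω (f d) ∧ d.fst ∈ f d ∧ d.snd ∈ f d :=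
    fun d => (hcr.2 d.adj).choose_spec.1
  have hmemK : ∀ d : G.Dart, f d ∈ G.cliqueFinset ω :=
    fun d => (SimpleGraph.mem_cliqueFinset_iff).mpr (hf d).1
  have hcard := Finset.card_eq_sum_card_fiberwise
    (f := f) (s := (Finset.univ : Finset G.Dart)) (t := G.cliqueFinset ω)
    (fun d _ => hmemK d)
  rw [Finset.card_univ] at hcard
  have hfib : ∀ s ∈ G.cliqueFinset ω,
      ((Finset.univ : Finset G.Dart).filter (fun d => f d = s)).card = ω * (ω - 1) := by
    intro s hs
    rw [SimpleGraph.mem_cliqueFinset_iff] at hs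
    have : ((Finset.univ : Finset G.Dart).filter (fun d => f d = s)).card = s.offDiag.card := by
      apply Finset.card_bij (fun d _ => d.toProd)
      · rintro d hd
        rw [Finset.mem_filter] at hd
        rw [Finset.mem_offDiag]
        have := hf d
        rw [hd.2] at this
        exact ⟨this.2.1, this.2.2, d.adj.ne⟩
      · intro d₁ h₁ d₂ h₂ h
        exact SimpleGraph.Dart.ext _ _ h
      · rintro ⟨x, y⟩ hxy
        rw [Finset.mem_offDiag] at hxy
        have hadj : G.Adj x y := hs.1 hxy.1 hxy.2.1 hxy.2.2
        refine ⟨⟨(x, y), hadj⟩, ?_, rfl⟩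
        rw [Finset.mem_filter]
        refine ⟨Finset.mem_univ _, ?_⟩
        obtain ⟨t, -, huniq⟩ := hcr.2 hadj
        have h1 := huniq _ (hf ⟨(x, y), hadj⟩)
        have h2 := huniq s ⟨hs, hxy.1, hxy.2.1⟩
        exact h1.trans h2.symm
    rw [this, Finset.offDiag_card, hs.2, Nat.mul_sub, Nat.mul_one]
  rw [← hdart, hcard, Finset.sum_congr rfl hfib, Finset.sum_const, smul_eq_mul]

noncomputable def cliqueMat (ω : ℕ) : Matrix {s // s ∈ G.cliqueFinset ω} V ℝ :=
  Matrix.of (fun s x => if x ∈ (s : Finset V) then (1 : ℝ) else 0)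

lemma cr_gram {ω k : ℕ} (hcr : IsCliqueRegular G ω) (hreg : G.IsRegularOfDegree k) :
    (cliqueMat G ω)ᴴ * cliqueMat G ω
      = G.adjMatrix ℝ + ((k / (ω - 1) : ℕ) : ℝ) • 1 := by
  have hω := cr_two_le G hcr
  have hc : ∀ x : V, ((G.cliqueFinset ω).filter (fun s => x ∈ s)).card = k / (ω - 1) := by
    intro x
    exact (Nat.div_eq_of_eq_mul_left (by omega) (cr_vertex_count G hcr hreg x).symm).symm
  ext x y
  rw [Matrix.mul_apply]
  have hsum : ∀ s : {s // s ∈ G.cliqueFinset ω},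
      (cliqueMat G ω)ᴴ x s * cliqueMat G ω s y
        = if x ∈ (s : Finset V) ∧ y ∈ (s : Finset V) then (1 : ℝ) else 0 := by
    intro s
    simp only [Matrix.conjTranspose_apply, cliqueMat, Matrix.of_apply, star_trivial]
    by_cases h1 : x ∈ (s : Finset V) <;> by_cases h2 : y ∈ (s : Finset V) <;> simp [h1, h2]
  rw [Finset.sum_congr rfl (fun s _ => hsum s)]
  have hsub : (∑ s : {s // s ∈ G.cliqueFinset ω},
      if x ∈ (s : Finset V) ∧ y ∈ (s : Finset V) then (1 : ℝ) else 0)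
      = ∑ s ∈ G.cliqueFinset ω, (if x ∈ s ∧ y ∈ s then (1 : ℝ) else 0) := by
    exact Finset.sum_coe_sort (G.cliqueFinset ω) (fun s => if x ∈ s ∧ y ∈ s then (1 : ℝ) else 0)
  rw [hsub, Finset.sum_boole]
  by_cases hxy : x = y
  · subst hxy
    have : (G.cliqueFinset ω).filter (fun s => x ∈ s ∧ x ∈ s)
        = (G.cliqueFinset ω).filter (fun s => x ∈ s) :=
      Finset.filter_congr (fun s _ => by tauto)
    rw [this, hc x]
    simp [Matrix.one_apply, SimpleGraph.adjMatrix_apply]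
  · by_cases hadj : G.Adj x y
    · obtain ⟨s₀, hs₀, huniq⟩ := hcr.2 hadj
      have : (G.cliqueFinset ω).filter (fun s => x ∈ s ∧ y ∈ s) = {s₀} := by
        ext s
        simp only [Finset.mem_filter, SimpleGraph.mem_cliqueFinset_iff, Finset.mem_singleton]
        constructor
        · rintro ⟨h1, h2, h3⟩; exact huniq s ⟨h1, h2, h3⟩
        · rintro rfl; exact ⟨hs₀.1, hs₀.2.1, hs₀.2.2⟩
      rw [this]
      simp [Matrix.one_apply, hxy, SimpleGraph.adjMatrix_apply, hadj]
    · have : (G.cliqueFinset ω).filter (fun s => x ∈ s ∧ y ∈ s) = ∅ := by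
        rw [Finset.filter_eq_empty_iff]
        rintro s hs ⟨h1, h2⟩
        rw [SimpleGraph.mem_cliqueFinset_iff] at hs
        exact hadj (hs.1 h1 h2 hxy)
      rw [this]
      simp [Matrix.one_apply, hxy, SimpleGraph.adjMatrix_apply, hadj]

end Graph

/-- If `Γ` is `k`-regular and `ω`-clique regular with smallest adjacency eigenvalue `λ₁`,
then `λ₁ ≥ −k/(ω−1)`; if moreover `k < ω(ω−1)`, then `λ₁ = −k/(ω−1)` with
multiplicity at least `n − nk/(ω(ω−1))`. -/
theorem stmt10 {V : Type*} [Fintype V] [DecidableEq V] (G : SimpleGraph V)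
    [DecidableRel G.Adj] (ω k : ℕ) (lam1 : ℝ)
    (hreg : G.IsRegularOfDegree k) (hcr : IsCliqueRegular G ω)
    (hmem : lam1 ∈ spectrum ℝ (G.adjMatrix ℝ))
    (hmin : ∀ μ ∈ spectrum ℝ (G.adjMatrix ℝ), lam1 ≤ μ) :
    -((k : ℝ) / ((ω : ℝ) - 1)) ≤ lam1 ∧
      (k < ω * (ω - 1) →
        lam1 = -((k : ℝ) / ((ω : ℝ) - 1)) ∧
          (Fintype.card V : ℝ) -
              (Fintype.card V : ℝ) * k / ((ω : ℝ) * ((ω : ℝ) - 1)) ≤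
            ((G.adjMatrix ℝ).charpoly.rootMultiplicity lam1 : ℝ)) := by
  classical
  set A := G.adjMatrix ℝ with hA
  have hω := cr_two_le G hcr
  obtain ⟨x0, y0, hxy0⟩ : ∃ x y : V, G.Adj x y := by
    obtain ⟨e, he⟩ := hcr.1
    induction e with
    | h x y =>
      rw [SimpleGraph.mem_edgeSet] at he
      exact ⟨x, y, he⟩
  set c := k / (ω - 1) with hcdef
  have hceq : c * (ω - 1) = k := by
    have h := cr_vertex_count G hcr hreg x0
    have h2 : ((G.cliqueFinset ω).filter (fun s => x0 ∈ s)).card = c :=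
      (Nat.div_eq_of_eq_mul_left (by omega) h.symm).symm
    rw [← h2]; exact h
  have hωR : (2 : ℝ) ≤ (ω : ℝ) := by exact_mod_cast hω
  have hne1 : (ω : ℝ) - 1 ≠ 0 := by linarith
  have hcast : ((ω - 1 : ℕ) : ℝ) = (ω : ℝ) - 1 := by
    rw [Nat.cast_sub (by omega), Nat.cast_one]
  have hkdiv : (k : ℝ) / ((ω : ℝ) - 1) = (c : ℝ) := by
    rw [div_eq_iff hne1, ← hcast]
    exact_mod_cast hceq.symm
  have hHerm : A.IsHermitian := by
    show Aᴴ = A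
    ext i j
    simp only [Matrix.conjTranspose_apply, hA, SimpleGraph.adjMatrix_apply, star_trivial]
    by_cases h : G.Adj i j
    · simp [h, h.symm]
    · simp only [if_neg h, if_neg (fun hh : G.Adj j i => h hh.symm)]
  have hgram := cr_gram G hcr hreg
  -- Part 1
  obtain ⟨v, hv0, hAv⟩ : ∃ v : V → ℝ, v ≠ 0 ∧ A *ᵥ v = lam1 • v := by
    rw [spectrum.mem_iff] at hmem
    have hdet : ((algebraMap ℝ (Matrix V V ℝ)) lam1 - A).det = 0 := by
      by_contra hd
      exact hmem ((Matrix.isUnit_iff_isUnit_det _).2 (isUnit_iff_ne_zero.2 hd))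
    obtain ⟨v, hv0, hv⟩ := (Matrix.exists_mulVec_eq_zero_iff).2 hdet
    refine ⟨v, hv0, ?_⟩
    rw [Algebra.algebraMap_eq_smul_one, Matrix.sub_mulVec, Matrix.smul_mulVec,
      Matrix.one_mulVec, sub_eq_zero] at hv
    exact hv.symm
  have hpsd := Matrix.posSemidef_conjTranspose_mul_self (cliqueMat G ω)
  have h0 := hpsd.dotProduct_mulVec_nonneg v
  rw [hgram] at h0
  have hMv : (A + (c : ℝ) • 1) *ᵥ v = (lam1 + c) • v := by
    rw [Matrix.add_mulVec, hAv, Matrix.smul_mulVec, Matrix.one_mulVec, ← add_smul]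
  rw [hMv] at h0
  have hdot : star v ⬝ᵥ ((lam1 + (c : ℝ)) • v) = (lam1 + c) * (v ⬝ᵥ v) := by
    rw [dotProduct_smul]
    simp [dotProduct, star_trivial, smul_eq_mul]
  rw [hdot] at h0
  have hvv : 0 < v ⬝ᵥ v := by
    obtain ⟨i, hi⟩ := Function.ne_iff.mp hv0
    have hi' : (0 : ℝ) < v i * v i := by
      have := mul_self_nonneg (v i)
      rcases this.lt_or_eq with h | h
      · exact h
      · exact absurd (mul_self_eq_zero.mp h.symm) hi
    exact Finset.sum_pos' (fun j _ => mul_self_nonneg _) ⟨i, Finset.mem_univ i, hi'⟩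
  have hge : -(c : ℝ) ≤ lam1 := by nlinarith
  refine ⟨by rw [hkdiv]; exact hge, ?_⟩
  intro hk
  -- Part 2
  have hglob := cr_global_count G hcr hreg
  have hn0 : 0 < Fintype.card V := Fintype.card_pos_iff.2 ⟨x0⟩
  have hmlt : (G.cliqueFinset ω).card < Fintype.card V := by
    have h1 : (G.cliqueFinset ω).card * (ω * (ω - 1))
        < Fintype.card V * (ω * (ω - 1)) := by
      rw [hglob]; exact (mul_lt_mul_iff_right₀ hn0).mpr hk
    exact lt_of_mul_lt_mul_right h1 (Nat.zero_le _)
  have hsubM : A - (-(c : ℝ)) • 1 = (cliqueMat G ω)ᴴ * cliqueMat G ω := by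
    rw [hgram, neg_smul, sub_neg_eq_add]
  have hrank : (A - (-(c : ℝ)) • 1).rank ≤ (G.cliqueFinset ω).card := by
    rw [hsubM, Matrix.rank_conjTranspose_mul_self]
    calc (cliqueMat G ω).rank ≤ Fintype.card {s // s ∈ G.cliqueFinset ω} :=
          Matrix.rank_le_card_height _
      _ = (G.cliqueFinset ω).card := Fintype.card_coe _
  have haux := hermitian_mult_add_rank' hHerm (-(c : ℝ))
  have hmem2 : -(c : ℝ) ∈ spectrum ℝ A := by
    rw [spectrum.mem_iff]
    intro hu
    have heq : (algebraMap ℝ (Matrix V V ℝ)) (-(c : ℝ)) - A = -(A - (-(c : ℝ)) • 1) := by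
      rw [Algebra.algebraMap_eq_smul_one, neg_sub]
    rw [heq] at hu
    have hu2 : IsUnit (A - (-(c : ℝ)) • 1) := by simpa using hu.neg
    have := Matrix.rank_of_isUnit _ hu2
    omega
  have heq1 : lam1 = -(c : ℝ) := le_antisymm (hmin _ hmem2) hge
  refine ⟨by rw [hkdiv, heq1], ?_⟩
  have hmultge : Fintype.card V ≤ (G.cliqueFinset ω).card
      + A.charpoly.rootMultiplicity (-(c : ℝ)) := by omega
  have hωR2 : (0 : ℝ) < (ω : ℝ) * ((ω : ℝ) - 1) := by nlinarith
  have hR : (Fintype.card V : ℝ) * k / ((ω : ℝ) * ((ω : ℝ) - 1))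
      = ((G.cliqueFinset ω).card : ℝ) := by
    rw [div_eq_iff (ne_of_gt hωR2)]
    have h2 := congrArg (Nat.cast : ℕ → ℝ) hglob
    push_cast [hcast] at h2
    linarith [h2]
  rw [heq1, hR]
  have hcast2 : ((G.cliqueFinset ω).card : ℝ)
      + (A.charpoly.rootMultiplicity (-(c : ℝ)) : ℝ) ≥ (Fintype.card V : ℝ) := by
    exact_mod_cast hmultge
  linarith
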